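/- Let λ₁, …, λ_N be finitely many complex numbers. Then there exist infinitely many integers n ≥ 1 such that |λ₁|ⁿ ≤ |λ₁ⁿ + λ₂ⁿ + ⋯ + λ_Nⁿ|. -/

import Mathlib

open Filter

/-- Simultaneous recurrence: unit complex numbers return close to 1 infinitely often. -/
lemma aux_recurrence {m : ℕ} (u : Fin m → ℂ) (hu : ∀ i, ‖u i‖ = 1)
    {ε : ℝ} (hε : 0 < ε) :
    {n : ℕ | 1 ≤ n ∧ ∀ i, ‖u i ^ n - 1‖ < ε}.Infinite := by
  apply Set.infinite_of_forall_exists_gt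
  intro a
  set N₀ : ℕ := a + 1 with hN₀
  set f : ℕ → (Fin m → ℂ) := fun k i => u i ^ (N₀ * k) with hf
  have habs : ∀ k i, ‖f k i‖ = 1 := by
    intro k i
    simp [hf, norm_pow, hu i]
  have hmem : ∀ k, f k ∈ Set.univ.pi (fun _ : Fin m => Metric.sphere (0 : ℂ) 1) := by
    intro k
    intro i _
    simp only [Metric.mem_sphere, Complex.dist_eq, sub_zero]
    exact habs k i
  have hcomp : IsCompact (Set.univ.pi (fun _ : Fin m => Metric.sphere (0 : ℂ) 1)) :=
    isCompact_univ_pi (fun _ => isCompact_sphere 0 1)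
  obtain ⟨b, -, φ, hφ, htend⟩ := hcomp.tendsto_subseq hmem
  rw [Metric.tendsto_atTop] at htend
  obtain ⟨K, hK⟩ := htend (ε / 2) (by positivity)
  have h1 : dist (f (φ (K + 1))) (f (φ K)) < ε := by
    calc dist (f (φ (K + 1))) (f (φ K))
        ≤ dist (f (φ (K + 1))) b + dist (f (φ K)) b := dist_triangle_right _ _ _
      _ < ε / 2 + ε / 2 := by
          exact add_lt_add (hK (K + 1) (by omega)) (hK K le_rfl)
      _ = ε := by ring
  have hlt : φ K < φ (K + 1) := hφ (Nat.lt_succ_self K)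
  refine ⟨N₀ * (φ (K + 1) - φ K), ⟨?_, ?_⟩, ?_⟩
  · have : 1 ≤ φ (K + 1) - φ K := by omega
    nlinarith [Nat.one_le_iff_ne_zero.mpr (show N₀ ≠ 0 by omega)]
  · intro i
    have key : u i ^ (N₀ * φ K) * (u i ^ (N₀ * (φ (K + 1) - φ K)) - 1)
        = f (φ (K + 1)) i - f (φ K) i := by
      have hle : N₀ * φ K ≤ N₀ * φ (K + 1) := Nat.mul_le_mul_left _ hlt.le
      have : N₀ * φ K + N₀ * (φ (K + 1) - φ K) = N₀ * φ (K + 1) := by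
        rw [← Nat.mul_add, Nat.add_sub_cancel' hlt.le]
      simp only [hf, mul_sub, mul_one, ← pow_add, this]
    have h2 : ‖u i ^ (N₀ * (φ (K + 1) - φ K)) - 1‖
        = ‖f (φ (K + 1)) i - f (φ K) i‖ := by
      rw [← key, norm_mul, norm_pow, hu i, one_pow, one_mul]
    rw [h2, ← Complex.dist_eq]
    calc dist (f (φ (K + 1)) i) (f (φ K) i) ≤ dist (f (φ (K + 1))) (f (φ K)) :=
          dist_le_pi_dist _ _ i
      _ < ε := h1
  · have h1 : 1 ≤ φ (K + 1) - φ K := by omega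
    calc a < N₀ := Nat.lt_succ_self a
      _ = N₀ * 1 := (mul_one _).symm
      _ ≤ N₀ * (φ (K + 1) - φ K) := Nat.mul_le_mul_left _ h1

/-- Monsky's lemma: for finitely many complex numbers `l 0, …, l N`, there are
infinitely many integers `n ≥ 1` with `|l 0|ⁿ ≤ |∑ i, (l i)ⁿ|`. -/
theorem monsky_lemma (N : ℕ) (l : Fin (N + 1) → ℂ) :
    {n : ℕ | 1 ≤ n ∧ ‖l 0‖ ^ n ≤ ‖∑ i, l i ^ n‖}.Infinite := by
  by_cases h0 : l 0 = 0
  · apply Set.Infinite.mono (s := {n : ℕ | 1 ≤ n})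
    · intro n hn
      have hn' : 1 ≤ n := hn
      refine ⟨hn', ?_⟩
      rw [h0, norm_zero]
      rw [zero_pow (Nat.one_le_iff_ne_zero.mp hn')]
      exact norm_nonneg _
    · exact Set.infinite_of_forall_exists_gt (fun a => ⟨a + 1, Nat.le_add_left _ _, Nat.lt_succ_self a⟩)
  · set ζ : Fin (N + 1) → ℂ := fun i => l i / l 0 with hζ
    set u : Fin (N + 1) → ℂ := fun i =>
      if l i = 0 then 1 else ζ i / ((‖ζ i‖ : ℝ) : ℂ) with hud
    have hζ0 : ∀ i, l i ≠ 0 → ζ i ≠ 0 := fun i hi => div_ne_zero hi h0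
    have hu : ∀ i, ‖u i‖ = 1 := by
      intro i
      by_cases hi : l i = 0
      · simp [hud, hi]
      · have hz := hζ0 i hi
        have hzpos : 0 < ‖ζ i‖ := by
          simpa [norm_pos_iff] using hz
        simp only [hud, if_neg hi, norm_div, Complex.norm_real, Real.norm_eq_abs, abs_of_pos hzpos]
        field_simp
    have := aux_recurrence u hu (ε := 1) one_pos
    apply Set.Infinite.mono _ this
    rintro n ⟨hn1, hn2⟩
    refine ⟨hn1, ?_⟩
    -- key: each Re (ζ i ^ n) ≥ 0 and Re (ζ 0 ^ n) = 1
    have hre : ∀ i, 0 ≤ (ζ i ^ n).re := by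
      intro i
      by_cases hi : l i = 0
      · have : ζ i = 0 := by simp [hζ, hi]
        rw [this, zero_pow (by omega : (n : ℕ) ≠ 0)]
        simp
      · have hz := hζ0 i hi
        have hzpos : 0 < ‖ζ i‖ := by
          simpa [norm_pos_iff] using hz
        have hcoe : ((‖ζ i‖ : ℝ) : ℂ) ≠ 0 := by
          exact_mod_cast hzpos.ne'
        have hfact : ζ i = ((‖ζ i‖ : ℝ) : ℂ) * u i := by
          rw [hud]; simp only [if_neg hi]
          field_simp
        have hreu : 0 ≤ (u i ^ n).re := by
          have habs1 : ‖u i ^ n‖ = 1 := by rw [norm_pow, hu i, one_pow]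
          have hlt := hn2 i
          -- |z| = 1 and |z - 1| < 1 implies re z ≥ 1/2 ≥ 0
          set z := u i ^ n with hzdef
          have e1 : z.re ^ 2 + z.im ^ 2 = 1 := by
            have := Complex.sq_norm z
            rw [habs1] at this
            rw [Complex.normSq_apply] at this
            nlinarith [this]
          have e2 : (z.re - 1) ^ 2 + z.im ^ 2 < 1 := by
            have h3 : ‖z - 1‖ ^ 2 < 1 := by nlinarith [hlt, norm_nonneg (z - 1)]
            have := Complex.sq_norm (z - 1)
            rw [Complex.normSq_apply] at this
            simp only [Complex.sub_re, Complex.sub_im, Complex.one_re, Complex.one_im,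
              sub_zero] at this
            nlinarith [h3, this]
          nlinarith [e1, e2]
        rw [hfact, mul_pow, ← Complex.ofReal_pow, Complex.re_ofReal_mul]
        exact mul_nonneg (pow_nonneg hzpos.le n) hreu
    have hre0 : (ζ 0 ^ n).re = 1 := by
      have : ζ 0 = 1 := by rw [hζ]; exact div_self h0
      rw [this, one_pow, Complex.one_re]
    have hsum : 1 ≤ (∑ i, ζ i ^ n).re := by
      rw [Complex.re_sum]
      calc (1 : ℝ) = (ζ 0 ^ n).re := hre0.symm
        _ ≤ ∑ i, (ζ i ^ n).re :=
            Finset.single_le_sum (fun i _ => hre i) (Finset.mem_univ 0)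
    have habs : 1 ≤ ‖∑ i, ζ i ^ n‖ :=
      le_trans hsum (Complex.re_le_norm _)
    have hdecomp : ∑ i, l i ^ n = l 0 ^ n * ∑ i, ζ i ^ n := by
      rw [Finset.mul_sum]
      apply Finset.sum_congr rfl
      intro i _
      rw [hζ]
      simp only [div_pow]
      rw [mul_div_cancel₀ _ (pow_ne_zero n h0)]
    rw [hdecomp, norm_mul, norm_pow]
    nlinarith [pow_nonneg (norm_nonneg (l 0)) n, habs,
      norm_nonneg (∑ i, ζ i ^ n)]
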